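/- Let S be a semigroup satisfying conditions (A), (B), (C), and let Q be the semigroup of ~-classes of Σ. Then Q is regular: for every [a,b] ∈ Q, [a,b][b,a][a,b] = [a,b]. -/
import Mathlib


/-- The bicyclic semigroup `𝓑` carried by `ℕ × ℕ`, an element being `(r, l)`;
`(m,n)(p,q) = (m - n + t, q - p + t)` with `t = max n p`. -/
structure Bicyclic where
  r : ℕ
  l : ℕ

instance : Mul Bicyclic :=
  ⟨fun x y => ⟨x.r + (max x.l y.r - x.l), y.l + (max x.l y.r - y.r)⟩⟩

/-- The inverse `(m,n)⁻¹ = (n,m)` in the bicyclic semigroup. -/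
def Bicyclic.inv (x : Bicyclic) : Bicyclic := ⟨x.l, x.r⟩

/-- `T` is a left I-order in the bicyclic semigroup `𝓑`. -/
def IsLeftIOrderBic (T : Set Bicyclic) : Prop :=
  ∀ q : Bicyclic, ∃ a ∈ T, ∃ b ∈ T, q = a.inv * b

/-- `r a`, the first coordinate of `φ a` in `𝓑`. -/
def rr {S : Type*} [Mul S] (φ : S →ₙ* Bicyclic) (a : S) : ℕ := (φ a).r

/-- `l a`, the second coordinate of `φ a` in `𝓑`. -/
def ll {S : Type*} [Mul S] (φ : S →ₙ* Bicyclic) (a : S) : ℕ := (φ a).l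

/-- Condition (A): the image of `φ` is a left I-order in `𝓑`. -/
def CondA {S : Type*} [Mul S] (φ : S →ₙ* Bicyclic) : Prop :=
  IsLeftIOrderBic (Set.range (⇑φ))

/-- Condition (B)(i): if `l x, l y ≥ r a` and `x * a = y * a` then `x = y`. -/
def CondBi {S : Type*} [Mul S] (φ : S →ₙ* Bicyclic) : Prop :=
  ∀ x y a : S, rr φ a ≤ ll φ x → rr φ a ≤ ll φ y → x * a = y * a → x = y

/-- Condition (B)(ii): if `r x, r y ≥ l a` and `a * x = a * y` then `x = y`. -/
def CondBii {S : Type*} [Mul S] (φ : S →ₙ* Bicyclic) : Prop :=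
  ∀ x y a : S, ll φ a ≤ rr φ x → ll φ a ≤ rr φ y → a * x = a * y → x = y

/-- Condition (C): for all `b c` there are `x y` with `x * b = y * c`,
`r x = r y`, `l x = r b - l b + max (l b) (l c)` and
`l y = r c - l c + max (l b) (l c)`. -/
def CondC {S : Type*} [Mul S] (φ : S →ₙ* Bicyclic) : Prop :=
  ∀ b c : S, ∃ x y : S, x * b = y * c ∧ rr φ x = rr φ y ∧
    ll φ x = rr φ b + (max (ll φ b) (ll φ c) - ll φ b) ∧
    ll φ y = rr φ c + (max (ll φ b) (ll φ c) - ll φ c)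

/-- `Σ = {(a,b) ∈ S × S : r a = r b}`. -/
abbrev Sig {S : Type*} [Mul S] (φ : S →ₙ* Bicyclic) : Type _ :=
  {p : S × S // rr φ p.1 = rr φ p.2}

/-- The relation `∼` on pairs: `(a,b) ∼ (c,d)` iff there are `x y` with
`x * a = y * c`, `x * b = y * d`, `l x = r a`, `l y = r c`, `r x = r y`. -/
def simP {S : Type*} [Mul S] (φ : S →ₙ* Bicyclic) (p q : S × S) : Prop :=
  ∃ x y : S, x * p.1 = y * q.1 ∧ x * p.2 = y * q.2 ∧
    ll φ x = rr φ p.1 ∧ ll φ y = rr φ q.1 ∧ rr φ x = rr φ y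

/-- The relation `∼` on `Σ`. -/
def sim {S : Type*} [Mul S] (φ : S →ₙ* Bicyclic) (p q : Sig φ) : Prop :=
  simP φ p.1 q.1

theorem rr_mul {S : Type*} [Mul S] (φ : S →ₙ* Bicyclic) (x a : S) :
    rr φ (x * a) = rr φ x + (max (ll φ x) (rr φ a) - ll φ x) := by
  simp only [rr, ll, map_mul]; rfl

theorem rr_mul_eq {S : Type*} [Mul S] (φ : S →ₙ* Bicyclic) {x a : S}
    (h : rr φ a ≤ ll φ x) : rr φ (x * a) = rr φ x := by
  have h1 := rr_mul φ x a
  have h2 : max (ll φ x) (rr φ a) = ll φ x := max_eq_left h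
  omega

theorem sig_mul_ok {S : Type*} [Mul S] (φ : S →ₙ* Bicyclic) {a b c d x y : S}
    (hab : rr φ a = rr φ b) (hcd : rr φ c = rr φ d)
    (hx : ll φ x = rr φ b + (max (ll φ b) (ll φ c) - ll φ b))
    (hy : ll φ y = rr φ c + (max (ll φ b) (ll φ c) - ll φ c))
    (hr : rr φ x = rr φ y) : rr φ (x * a) = rr φ (y * d) := by
  have h1 := rr_mul_eq φ (x := x) (a := a)
    (by have := le_max_left (ll φ b) (ll φ c); omega)
  have h2 := rr_mul_eq φ (x := y) (a := d)
    (by have := le_max_right (ll φ b) (ll φ c); omega)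
  omega

/-- The set `Q` of `∼`-classes of `Σ`. -/
def QT {S : Type*} [Mul S] (φ : S →ₙ* Bicyclic) : Type _ := Quot (sim φ)

/-- The `∼`-class `[a,b]` of an element of `Σ`. -/
def cls {S : Type*} [Mul S] (φ : S →ₙ* Bicyclic) (p : Sig φ) : QT φ :=
  Quot.mk _ p

/-- Packaging `(a, b)` with `r a = r b` as an element of `Σ`. -/
def mkSig {S : Type*} [Mul S] (φ : S →ₙ* Bicyclic) (a b : S)
    (h : rr φ a = rr φ b) : Sig φ := ⟨(a, b), h⟩

/-- A chosen witness `x` from condition (C) applied to `b, c`. -/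
noncomputable def cx {S : Type*} [Mul S] {φ : S →ₙ* Bicyclic} (hC : CondC φ)
    (b c : S) : S := (hC b c).choose

/-- A chosen witness `y` from condition (C) applied to `b, c`. -/
noncomputable def cy {S : Type*} [Mul S] {φ : S →ₙ* Bicyclic} (hC : CondC φ)
    (b c : S) : S := (hC b c).choose_spec.choose

theorem c_spec {S : Type*} [Mul S] {φ : S →ₙ* Bicyclic} (hC : CondC φ) (b c : S) :
    cx hC b c * b = cy hC b c * c ∧ rr φ (cx hC b c) = rr φ (cy hC b c) ∧
    ll φ (cx hC b c) = rr φ b + (max (ll φ b) (ll φ c) - ll φ b) ∧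
    ll φ (cy hC b c) = rr φ c + (max (ll φ b) (ll φ c) - ll φ c) :=
  (hC b c).choose_spec.choose_spec

/-- Representative-level multiplication: `(a,b) · (c,d) = (x * a, y * d)` where
`x, y` are the witnesses from condition (C) for `b, c`. -/
noncomputable def pairMul {S : Type*} [Mul S] {φ : S →ₙ* Bicyclic} (hC : CondC φ)
    (p q : Sig φ) : Sig φ :=
  ⟨(cx hC p.1.2 q.1.1 * p.1.1, cy hC p.1.2 q.1.1 * q.1.2),
    sig_mul_ok φ p.2 q.2 (c_spec hC p.1.2 q.1.1).2.2.1
      (c_spec hC p.1.2 q.1.1).2.2.2 (c_spec hC p.1.2 q.1.1).2.1⟩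

/-- The multiplication `[a,b][c,d] = [x*a, y*d]` on the set `Q` of `∼`-classes. -/
noncomputable def qmul {S : Type*} [Mul S] {φ : S →ₙ* Bicyclic} (hC : CondC φ)
    (u v : QT φ) : QT φ :=
  cls φ (pairMul hC (Quot.out u) (Quot.out v))

theorem ll_cx_self {S : Type*} [Mul S] {φ : S →ₙ* Bicyclic} (hC : CondC φ)
    (a : S) : ll φ (cx hC a a) = rr φ a := by
  have h := (c_spec hC a a).2.2.1
  have h2 : max (ll φ a) (ll φ a) = ll φ a := max_self _
  omega

/-- The embedding `θ : S → Q`, `a θ = [x, x*a]` for a chosen `x` with `l x = r a`. -/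
noncomputable def theta {S : Type*} [Mul S] {φ : S →ₙ* Bicyclic} (hC : CondC φ)
    (a : S) : QT φ :=
  cls φ ⟨(cx hC a a, cx hC a a * a), (rr_mul_eq φ (ll_cx_self hC a).ge).symm⟩

/-- The inverse `[a,b]⁻¹ = [b,a]` on `Q`. -/
noncomputable def qinv {S : Type*} [Mul S] {φ : S →ₙ* Bicyclic} (u : QT φ) :
    QT φ :=
  cls φ ⟨((Quot.out u).1.2, (Quot.out u).1.1), (Quot.out u).2.symm⟩

set_option linter.unusedVariables false

section AuxProof

variable {S : Type*} [Semigroup S] {φ : S →ₙ* Bicyclic}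

theorem ll_mul (φ : S →ₙ* Bicyclic) (x a : S) :
    ll φ (x * a) = ll φ a + (max (ll φ x) (rr φ a) - rr φ a) := by
  simp only [rr, ll, map_mul]; rfl

theorem rr_mul' (φ : S →ₙ* Bicyclic) (x a : S) :
    rr φ (x * a) = rr φ x + (max (ll φ x) (rr φ a) - ll φ x) := rr_mul φ x a

theorem simP_refl (hC : CondC φ) (p : S × S) : simP φ p p := by
  refine ⟨cx hC p.1 p.1, cx hC p.1 p.1, rfl, rfl, ?_, ?_, rfl⟩ <;>
    exact ll_cx_self hC p.1

theorem simP_symm {p q : S × S} (h : simP φ p q) : simP φ q p := by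
  obtain ⟨x, y, h1, h2, h3, h4, h5⟩ := h
  exact ⟨y, x, h1.symm, h2.symm, h4, h3, h5.symm⟩

theorem simP_trans (hC : CondC φ) {p q r : S × S}
    (h1 : simP φ p q) (h2 : simP φ q r) : simP φ p r := by
  obtain ⟨x, y, hxa, hxb, hlx, hly, hrxy⟩ := h1
  obtain ⟨u, v, huc, hud, hlu, hlv, hruv⟩ := h2
  obtain ⟨hst, hrst, hls, hlt⟩ := c_spec hC y u
  set s := cx hC y u
  set t := cy hC y u
  refine ⟨s * x, t * v, ?_, ?_, ?_, ?_, ?_⟩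
  · rw [mul_assoc, hxa, ← mul_assoc, hst, mul_assoc, huc, ← mul_assoc]
  · rw [mul_assoc, hxb, ← mul_assoc, hst, mul_assoc, hud, ← mul_assoc]
  · have e1 := ll_mul φ s x
    omega
  · have e1 := ll_mul φ t v
    omega
  · have e1 := rr_mul' φ s x
    have e2 := rr_mul' φ t v
    omega

theorem sim_equiv (hC : CondC φ) : Equivalence (sim φ) :=
  ⟨fun p => simP_refl hC p.1, simP_symm, simP_trans hC⟩

theorem out_sim (hC : CondC φ) (p : Sig φ) : sim φ (Quot.out (cls φ p)) p :=
  ((sim_equiv hC).eqvGen_iff).mp (Quot.eqvGen_exact (Quot.out_eq (cls φ p)))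

set_option maxHeartbeats 1000000 in
theorem pairMul_congr (hBi : CondBi φ) (hC : CondC φ) {p p' q q' : Sig φ}
    (h1 : sim φ p p') (h2 : sim φ q q') :
    sim φ (pairMul hC p q) (pairMul hC p' q') := by
  obtain ⟨⟨a, b⟩, hab⟩ := p
  obtain ⟨⟨a1, b1⟩, hab1⟩ := p'
  obtain ⟨⟨c, d⟩, hcd⟩ := q
  obtain ⟨⟨c1, d1⟩, hcd1⟩ := q'
  dsimp only at hab hab1 hcd hcd1
  unfold sim simP at h1 h2 ⊢
  dsimp only [pairMul] at h1 h2 ⊢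
  obtain ⟨x, y, hxa, hxb, hlx, hly, hrxy⟩ := h1
  obtain ⟨u, v, huc, hud, hlu, hlv, hruv⟩ := h2
  have hlb1 : ll φ b1 = ll φ b := by
    have e0 := congrArg (ll φ) hxb
    rw [ll_mul, ll_mul] at e0
    omega
  have hlc1 : ll φ c1 = ll φ c := by
    have e0 := congrArg (ll φ) huc
    rw [ll_mul, ll_mul] at e0
    omega
  obtain ⟨hwz, hrwz, hlw, hlz⟩ := c_spec hC b c
  set w := cx hC b c
  set z := cy hC b c
  obtain ⟨hwz1, hrwz1, hlw1, hlz1⟩ := c_spec hC b1 c1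
  set w1 := cx hC b1 c1
  set z1 := cy hC b1 c1
  rw [hlb1, hlc1] at hlw1 hlz1
  obtain ⟨e1, hr1, hls1, hlt1⟩ := c_spec hC w x
  set s1 := cx hC w x
  set t1 := cy hC w x
  have hls1' : ll φ s1 = rr φ w := by omega
  have hlt1' : ll φ t1 = rr φ x + (max (ll φ b) (ll φ c) - ll φ b) := by omega
  clear hls1 hlt1
  obtain ⟨e2, hr2, hls2, hlt2⟩ := c_spec hC z u
  set s2 := cx hC z u
  set t2 := cy hC z u
  have hls2' : ll φ s2 = rr φ w := by omega
  have hlt2' : ll φ t2 = rr φ u + (max (ll φ b) (ll φ c) - ll φ c) := by omega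
  clear hls2 hlt2
  obtain ⟨e3, hr3, hlk1, hlk2⟩ := c_spec hC s1 s2
  set k1 := cx hC s1 s2
  set k2 := cy hC s1 s2
  have hlk1' : ll φ k1 = rr φ s1 := by omega
  have hlk2' : ll φ k2 = rr φ s2 := by omega
  clear hlk1 hlk2
  obtain ⟨e4, hr4, hls3, hlt3⟩ := c_spec hC w1 y
  set s3 := cx hC w1 y
  set t3 := cy hC w1 y
  have hls3' : ll φ s3 = rr φ w1 := by omega
  have hlt3' : ll φ t3 = rr φ y + (max (ll φ b) (ll φ c) - ll φ b) := by omega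
  clear hls3 hlt3
  obtain ⟨e5, hr5, hls4, hlt4⟩ := c_spec hC z1 v
  set s4 := cx hC z1 v
  set t4 := cy hC z1 v
  have hls4' : ll φ s4 = rr φ w1 := by omega
  have hlt4' : ll φ t4 = rr φ v + (max (ll φ b) (ll φ c) - ll φ c) := by omega
  clear hls4 hlt4
  obtain ⟨e6, hr6, hlk3, hlk4⟩ := c_spec hC s3 s4
  set k3 := cx hC s3 s4
  set k4 := cy hC s3 s4
  have hlk3' : ll φ k3 = rr φ s3 := by omega
  have hlk4' : ll φ k4 = rr φ s4 := by omega
  clear hlk3 hlk4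
  have hA1 : ll φ (k1 * t1) = rr φ x + (max (ll φ b) (ll φ c) - ll φ b) := by
    rw [ll_mul]; omega
  have hA2 : rr φ (k1 * t1) = rr φ k1 := by rw [rr_mul']; omega
  have hA3 : ll φ (k3 * t3) = rr φ y + (max (ll φ b) (ll φ c) - ll φ b) := by
    rw [ll_mul]; omega
  have hA4 : rr φ (k3 * t3) = rr φ k3 := by rw [rr_mul']; omega
  obtain ⟨ePQ, hrPQ, hlP, hlQ⟩ := c_spec hC (k1 * t1) (k3 * t3)
  set P := cx hC (k1 * t1) (k3 * t3)
  set Q := cy hC (k1 * t1) (k3 * t3)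
  clear_value w z w1 z1 s1 t1 s2 t2 k1 k2 s3 t3 s4 t4 k3 k4 P Q
  rw [hA1, hA2, hA3] at hlP
  rw [hA1, hA3, hA4] at hlQ
  have hlP' : ll φ P = rr φ k1 := by omega
  have hlQ' : ll φ Q = rr φ k3 := by omega
  clear hlP hlQ
  have hB1 : ll φ (k2 * t2) = rr φ u + (max (ll φ b) (ll φ c) - ll φ c) := by
    rw [ll_mul]; omega
  have hB2 : rr φ (k2 * t2) = rr φ k1 := by rw [rr_mul']; omega
  have hB3 : ll φ (k4 * t4) = rr φ v + (max (ll φ b) (ll φ c) - ll φ c) := by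
    rw [ll_mul]; omega
  have hB4 : rr φ (k4 * t4) = rr φ k3 := by rw [rr_mul']; omega
  have hD1 : ll φ (k1 * s1) = rr φ w := by rw [ll_mul]; omega
  have hD2 : rr φ (k1 * s1) = rr φ k1 := by rw [rr_mul']; omega
  have hD3 : ll φ (k3 * s3) = rr φ w1 := by rw [ll_mul]; omega
  have hD4 : rr φ (k3 * s3) = rr φ k3 := by rw [rr_mul']; omega
  have hruc : rr φ (u * c) = rr φ u := by rw [rr_mul']; omega
  -- key equalities of products
  have f1 : (k1 * s1) * w = (k1 * t1) * x := by rw [mul_assoc, e1, ← mul_assoc]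
  have f2 : (k2 * s2) * z = (k2 * t2) * u := by rw [mul_assoc, e2, ← mul_assoc]
  have f3 : (k3 * s3) * w1 = (k3 * t3) * y := by rw [mul_assoc, e4, ← mul_assoc]
  have f4 : (k4 * s4) * z1 = (k4 * t4) * v := by rw [mul_assoc, e5, ← mul_assoc]
  have key : (P * (k2 * t2)) * (u * c) = (Q * (k4 * t4)) * (u * c) := by
    calc (P * (k2 * t2)) * (u * c)
        = P * (((k2 * t2) * u) * c) := by rw [mul_assoc P, ← mul_assoc (k2 * t2)]
      _ = P * (((k2 * s2) * z) * c) := by rw [← f2]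
      _ = P * ((k2 * s2) * (z * c)) := by rw [mul_assoc (k2 * s2)]
      _ = P * ((k1 * s1) * (w * b)) := by rw [← hwz, ← e3]
      _ = P * (((k1 * s1) * w) * b) := by rw [← mul_assoc (k1 * s1)]
      _ = P * (((k1 * t1) * x) * b) := by rw [f1]
      _ = (P * (k1 * t1)) * (x * b) := by rw [mul_assoc (k1 * t1), ← mul_assoc P]
      _ = (Q * (k3 * t3)) * (y * b1) := by rw [ePQ, hxb]
      _ = Q * (((k3 * t3) * y) * b1) := by rw [mul_assoc Q, ← mul_assoc (k3 * t3)]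
      _ = Q * (((k3 * s3) * w1) * b1) := by rw [f3]
      _ = Q * ((k3 * s3) * (w1 * b1)) := by rw [mul_assoc (k3 * s3)]
      _ = Q * ((k4 * s4) * (z1 * c1)) := by rw [hwz1, e6]
      _ = Q * (((k4 * t4) * v) * c1) := by rw [← mul_assoc (k4 * s4), f4]
      _ = (Q * (k4 * t4)) * (v * c1) := by rw [mul_assoc (k4 * t4), ← mul_assoc Q]
      _ = (Q * (k4 * t4)) * (u * c) := by rw [← huc]
  have hPT2 : P * (k2 * t2) = Q * (k4 * t4) := by
    refine hBi _ _ (u * c) ?_ ?_ key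
    · rw [ll_mul, hruc, hB1, hB2, hlP']; omega
    · rw [ll_mul, hruc, hB3, hB4, hlQ']; omega
  refine ⟨P * (k1 * s1), Q * (k3 * s3), ?_, ?_, ?_, ?_, ?_⟩
  · calc (P * (k1 * s1)) * (w * a)
        = P * (((k1 * s1) * w) * a) := by rw [mul_assoc P, ← mul_assoc (k1 * s1)]
      _ = P * (((k1 * t1) * x) * a) := by rw [f1]
      _ = (P * (k1 * t1)) * (x * a) := by rw [mul_assoc (k1 * t1), ← mul_assoc P]
      _ = (Q * (k3 * t3)) * (y * a1) := by rw [ePQ, hxa]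
      _ = Q * (((k3 * t3) * y) * a1) := by rw [mul_assoc Q, ← mul_assoc (k3 * t3)]
      _ = Q * (((k3 * s3) * w1) * a1) := by rw [f3]
      _ = (Q * (k3 * s3)) * (w1 * a1) := by rw [mul_assoc (k3 * s3), ← mul_assoc Q]
  · calc (P * (k1 * s1)) * (z * d)
        = P * ((k2 * s2) * (z * d)) := by rw [mul_assoc P, e3]
      _ = P * (((k2 * s2) * z) * d) := by rw [← mul_assoc (k2 * s2)]
      _ = P * (((k2 * t2) * u) * d) := by rw [f2]
      _ = (P * (k2 * t2)) * (u * d) := by rw [mul_assoc (k2 * t2), ← mul_assoc P]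
      _ = (Q * (k4 * t4)) * (v * d1) := by rw [hPT2, hud]
      _ = Q * (((k4 * t4) * v) * d1) := by rw [mul_assoc Q, ← mul_assoc (k4 * t4)]
      _ = Q * (((k4 * s4) * z1) * d1) := by rw [← f4]
      _ = Q * ((k3 * s3) * (z1 * d1)) := by rw [mul_assoc (k4 * s4), ← e6]
      _ = (Q * (k3 * s3)) * (z1 * d1) := by rw [← mul_assoc Q]
  · rw [ll_mul, rr_mul' φ w a, hD1, hD2, hlP']; omega
  · rw [ll_mul, rr_mul' φ w1 a1, hD3, hD4, hlQ']; omega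
  · rw [rr_mul' φ P, rr_mul' φ Q, hD2, hD4, hlP', hlQ']; omega

theorem qmul_cls (hBi : CondBi φ) (hC : CondC φ) (p q : Sig φ) :
    qmul hC (cls φ p) (cls φ q) = cls φ (pairMul hC p q) :=
  Quot.sound (pairMul_congr hBi hC (out_sim hC p) (out_sim hC q))

theorem reg_rep (hBi : CondBi φ) (hC : CondC φ) (p : Sig φ) :
    sim φ (pairMul hC (pairMul hC p ⟨(p.1.2, p.1.1), p.2.symm⟩) p) p := by
  obtain ⟨⟨a, b⟩, hab⟩ := p
  dsimp only at hab
  obtain ⟨hxy0, hrxy, hlx, hly⟩ := c_spec hC b b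
  set x := cx hC b b
  set y := cy hC b b
  have hxey : x = y := by
    refine hBi x y b ?_ ?_ hxy0 <;> omega
  obtain ⟨huv, hruv, hlu, hlv⟩ := c_spec hC (y * a) a
  set u := cx hC (y * a) a
  set v := cy hC (y * a) a
  have hlya := ll_mul φ y a
  have hrya := rr_mul' φ y a
  show simP φ (u * (x * a), v * b) (a, b)
  unfold simP
  dsimp only
  obtain ⟨hs0, hrs0, hls0, _⟩ := c_spec hC v v
  set s := cx hC v v
  clear_value x y u v s
  have hlsv : ll φ s = rr φ v := by omega
  have n1 := ll_mul φ s v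
  have n2 := rr_mul' φ s v
  have n3 := rr_mul' φ u (x * a)
  have n4 := rr_mul' φ x a
  refine ⟨s, s * v, ?_, ?_, ?_, ?_, ?_⟩
  · rw [hxey, huv, ← mul_assoc]
  · rw [mul_assoc]
  · rw [hxey] at n3 n4 ⊢
    omega
  · omega
  · omega

end AuxProof

/-- `Q` is regular: `[a,b][b,a][a,b] = [a,b]`. -/
theorem stmt15 {S : Type*} [Semigroup S] (φ : S →ₙ* Bicyclic)
    (hA : CondA φ) (hBi : CondBi φ) (hBii : CondBii φ) (hC : CondC φ) :
    ∀ p : Sig φ,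
      qmul hC (qmul hC (cls φ p) (cls φ ⟨(p.1.2, p.1.1), p.2.symm⟩)) (cls φ p) =
        cls φ p := by
  intro p
  rw [qmul_cls hBi hC, qmul_cls hBi hC]
  exact Quot.sound (reg_rep hBi hC p)
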